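/- Let V be a finite-dimensional vector space over a field K and let k ≥ 2 be an even integer. Then for any endomorphisms X_1, …, X_k of V, the alternating trace sum ∑_{σ ∈ S_k} sgn(σ) · trace(X_{σ(1)} ∘ X_{σ(2)} ∘ ⋯ ∘ X_{σ(k)}) equals 0. -/

import Mathlib

lemma trace_prod_rotate_one {K V : Type*} [Field K] [AddCommGroup V] [Module K V]
    [FiniteDimensional K V] (l : List (Module.End K V)) :
    LinearMap.trace K V (l.rotate 1).prod = LinearMap.trace K V l.prod := by
  cases l with
  | nil => simp
  | cons a t =>
    simp only [List.rotate_cons_succ, List.rotate_zero, List.prod_append, List.prod_cons,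
      List.prod_nil, mul_one]
    exact LinearMap.trace_mul_comm K t.prod a

lemma ofFn_comp_rotate {m : ℕ} {α : Type*} (f : Fin (m + 1) → α)
    (σ : Equiv.Perm (Fin (m + 1))) :
    (List.ofFn fun i => f ((σ * finRotate (m + 1)) i))
      = (List.ofFn fun i => f (σ i)).rotate 1 := by
  apply List.ext_getElem
  · simp
  · intro n h1 h2
    simp only [List.getElem_ofFn, List.getElem_rotate, List.length_ofFn]
    apply congrArg
    simp only [Equiv.Perm.mul_apply, finRotate_succ_apply]
    apply congrArg
    apply Fin.ext
    simp only [List.length_ofFn] at h1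
    simp [Fin.add_def, Nat.mod_eq_of_lt h1]

/-- For endomorphisms `X_1, …, X_k` of a finite-dimensional vector space `V` over a field `K`,
with `k ≥ 2` even, the alternating trace sum
`∑_{σ ∈ S_k} sgn(σ) · trace (X_{σ(1)} ∘ ⋯ ∘ X_{σ(k)})` vanishes. -/
theorem stmt_1 {K V : Type*} [Field K] [AddCommGroup V] [Module K V]
    [FiniteDimensional K V] (k : ℕ) (hk : Even k) (hk2 : 2 ≤ k)
    (X : Fin k → Module.End K V) :
    ∑ σ : Equiv.Perm (Fin k),
      ((Equiv.Perm.sign σ : ℤ) : K) *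
        LinearMap.trace K V ((List.ofFn fun i => X (σ i)).prod) = 0 := by
  obtain ⟨m, rfl⟩ : ∃ m, k = m + 1 := ⟨k - 1, by omega⟩
  set c : Equiv.Perm (Fin (m + 1)) := finRotate (m + 1) with hc
  have hm : Odd m := by
    rcases hk with ⟨t, ht⟩; exact ⟨t - 1, by omega⟩
  have hsc : Equiv.Perm.sign c = -1 := by
    rw [hc, sign_finRotate, Nat.add_sub_cancel, Odd.neg_one_pow hm]
  have hcne : c ≠ 1 := by
    intro h
    have h0 : c 0 = 0 := by rw [h]; rfl
    rw [hc, finRotate_succ_apply, zero_add] at h0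
    rw [Fin.one_eq_zero_iff] at h0
    omega
  set f : Equiv.Perm (Fin (m + 1)) → K := fun σ =>
    ((Equiv.Perm.sign σ : ℤ) : K) *
      LinearMap.trace K V ((List.ofFn fun i => X (σ i)).prod) with hf
  have key : ∀ σ, f (σ * c) = - f σ := by
    intro σ
    have h1 : (List.ofFn fun i => X ((σ * c) i)) = (List.ofFn fun i => X (σ i)).rotate 1 :=
      ofFn_comp_rotate X σ
    simp only [hf, h1, trace_prod_rotate_one, Equiv.Perm.sign_mul, hsc,
      mul_neg, mul_one, Units.val_neg, Units.val_one, Int.cast_neg, neg_mul]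
  have keyinv : ∀ σ, f (σ * c⁻¹) = - f σ := by
    intro σ
    have h := key (σ * c⁻¹)
    rw [inv_mul_cancel_right] at h
    linear_combination h
  classical
  apply Finset.sum_ninvolution
    (g := fun σ => if Equiv.Perm.sign σ = 1 then σ * c else σ * c⁻¹)
  · intro σ
    show f σ + f (if Equiv.Perm.sign σ = 1 then σ * c else σ * c⁻¹) = 0
    by_cases h : Equiv.Perm.sign σ = 1
    · rw [if_pos h, key]; ring
    · rw [if_neg h, keyinv]; ring
  · intro σ _
    by_cases h : Equiv.Perm.sign σ = 1
    · rw [if_pos h]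
      intro heq
      exact hcne (mul_left_cancel (a := σ) (by rw [mul_one]; exact heq))
    · rw [if_neg h]
      intro heq
      have : c⁻¹ = 1 := mul_left_cancel (a := σ) (by rw [mul_one]; exact heq)
      exact hcne (inv_eq_one.mp this)
  · intro σ; exact Finset.mem_univ _
  · intro σ
    by_cases h : Equiv.Perm.sign σ = 1
    · have h2 : Equiv.Perm.sign (σ * c) ≠ 1 := by
        rw [Equiv.Perm.sign_mul, h, hsc]; decide
      rw [if_pos h, if_neg h2, mul_inv_cancel_right]
    · have h1 : Equiv.Perm.sign σ = -1 :=
        (Int.units_eq_one_or (Equiv.Perm.sign σ)).resolve_left h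
      have h2 : Equiv.Perm.sign (σ * c⁻¹) = 1 := by
        rw [Equiv.Perm.sign_mul, h1, map_inv, hsc]; decide
      rw [if_neg h, if_pos h2, inv_mul_cancel_right]
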